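/- For every n ≥ 2, the polynomial χ_n(λ) = λ^n - λ^{n-1} - ... - λ - 1 has exactly one real root r with r > 1, this root satisfies 1 < r < 2, and every complex root λ of χ_n with λ ≠ r satisfies |λ| < 1. -/

import Mathlib

lemma aux_sum_inv {K : Type*} [Field K] (n : ℕ) (t : K) (ht : t ≠ 0) :
    ∑ i ∈ Finset.range n, t ^ i = t ^ n * ∑ j ∈ Finset.range n, t⁻¹ ^ (j + 1) := by
  have hrefl := Finset.sum_range_reflect (fun i => t ^ i) n
  rw [← hrefl, Finset.mul_sum]
  refine Finset.sum_congr rfl fun j hj => ?_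
  have hj' := Finset.mem_range.mp hj
  have h1 : t ^ n = t ^ (n - 1 - j) * t ^ (j + 1) := by
    rw [← pow_add]; congr 1; omega
  rw [inv_pow, h1, mul_assoc, mul_inv_cancel₀ (pow_ne_zero _ ht), mul_one]

theorem nbonacci_char_poly_roots (n : ℕ) (hn : 2 ≤ n) :
    ∃ r : ℝ, 1 < r ∧ r < 2 ∧
      (r ^ n - ∑ i ∈ Finset.range n, r ^ i = 0) ∧
      (∀ s : ℝ, 1 < s → s ^ n - ∑ i ∈ Finset.range n, s ^ i = 0 → s = r) ∧
      (∀ z : ℂ, z ^ n - ∑ i ∈ Finset.range n, z ^ i = 0 → z ≠ (r : ℂ) →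
        ‖z‖ < 1) := by
  have hn0 : n ≠ 0 := by omega
  -- existence of the root via IVT
  have hcont : Continuous fun s : ℝ => s ^ n - ∑ i ∈ Finset.range n, s ^ i :=
    (continuous_pow n).sub (continuous_finset_sum _ fun i _ => continuous_pow i)
  have hf1 : (1:ℝ) ^ n - ∑ i ∈ Finset.range n, (1:ℝ) ^ i < 0 := by
    have : (2:ℝ) ≤ n := by exact_mod_cast hn
    simp only [one_pow, Finset.sum_const, Finset.card_range, nsmul_eq_mul, mul_one]
    linarith
  have hf2 : (0:ℝ) < (2:ℝ) ^ n - ∑ i ∈ Finset.range n, (2:ℝ) ^ i := by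
    rw [geom_sum_eq (by norm_num) n]
    norm_num
  have hiv := intermediate_value_Ioo (by norm_num : (1:ℝ) ≤ 2) hcont.continuousOn
  obtain ⟨r, hrmem, hr⟩ := hiv ⟨hf1, hf2⟩
  obtain ⟨hr1, hr2⟩ := hrmem
  have hr0 : (0:ℝ) < r := by linarith
  simp only at hr
  -- strict monotonicity of S t = ∑ t^(j+1)
  have hSmono : ∀ a b : ℝ, 0 ≤ a → a < b →
      ∑ j ∈ Finset.range n, a ^ (j+1) < ∑ j ∈ Finset.range n, b ^ (j+1) := by
    intro a b ha hab
    exact Finset.sum_lt_sum_of_nonempty (Finset.nonempty_range_iff.mpr hn0)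
      (fun j _ => pow_lt_pow_left₀ hab ha (Nat.succ_ne_zero j))
  have hkey : ∀ t : ℝ, t ≠ 0 →
      t ^ n - ∑ i ∈ Finset.range n, t ^ i
        = t ^ n * (1 - ∑ j ∈ Finset.range n, (t⁻¹) ^ (j+1)) := by
    intro t ht
    rw [aux_sum_inv n t ht]; ring
  have hSr : ∑ j ∈ Finset.range n, (r⁻¹) ^ (j+1) = 1 := by
    have h := hkey r hr0.ne'
    rw [hr] at h
    have hrn : (0:ℝ) < r ^ n := pow_pos hr0 n
    have := (mul_eq_zero.mp h.symm).resolve_left hrn.ne'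
    linarith
  -- uniqueness
  have huniq : ∀ s : ℝ, 1 < s → s ^ n - ∑ i ∈ Finset.range n, s ^ i = 0 → s = r := by
    intro s hs hsf
    have hs0 : (0:ℝ) < s := by linarith
    have hSs : ∑ j ∈ Finset.range n, (s⁻¹) ^ (j+1) = 1 := by
      have h := hkey s hs0.ne'
      rw [hsf] at h
      have hsn : (0:ℝ) < s ^ n := pow_pos hs0 n
      have := (mul_eq_zero.mp h.symm).resolve_left hsn.ne'
      linarith
    rcases lt_trichotomy s⁻¹ r⁻¹ with h | h | h
    · have := hSmono s⁻¹ r⁻¹ (by positivity) h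
      rw [hSs, hSr] at this; linarith
    · exact inv_injective h
    · have := hSmono r⁻¹ s⁻¹ (by positivity) h
      rw [hSs, hSr] at this; linarith
  -- negativity on (1, r)
  have hneg : ∀ t : ℝ, 1 < t → t < r →
      t ^ n - ∑ i ∈ Finset.range n, t ^ i < 0 := by
    intro t ht1 htr
    have ht0 : (0:ℝ) < t := by linarith
    have hinv : r⁻¹ < t⁻¹ := by
      apply inv_strictAnti₀ ht0 htr
    have hS := hSmono r⁻¹ t⁻¹ (by positivity) hinv
    rw [hSr] at hS
    rw [hkey t ht0.ne']
    have htn : (0:ℝ) < t ^ n := pow_pos ht0 n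
    nlinarith
  refine ⟨r, hr1, hr2, hr, huniq, ?_⟩
  -- complex roots
  intro z hz hzr
  by_contra hlt
  push_neg at hlt
  set t := ‖z‖ with htdef
  have ht1 : 1 ≤ t := hlt
  have hz0 : z ≠ 0 := by
    intro h; rw [h] at htdef; simp at htdef; rw [htdef] at ht1; linarith
  have h2 : z ^ (n+1) + 1 = 2 * z ^ n := by
    linear_combination (z - 1) * hz + geom_sum_mul z n
  have hzsum : ∑ j ∈ Finset.range n, (z⁻¹) ^ (j+1) = 1 := by
    have h := aux_sum_inv n z hz0
    have hzn : z ^ n ≠ 0 := pow_ne_zero _ hz0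
    have h3 : z ^ n * 1 = z ^ n * ∑ j ∈ Finset.range n, (z⁻¹) ^ (j+1) := by
      rw [mul_one]; exact (sub_eq_zero.mp hz).trans h
    exact (mul_left_cancel₀ hzn h3).symm
  have habsinv : ‖z⁻¹‖ = t⁻¹ := by rw [norm_inv]
  have hre1 : ∑ j ∈ Finset.range n, ((z⁻¹) ^ (j+1)).re = 1 := by
    rw [← Complex.re_sum, hzsum, Complex.one_re]
  rcases lt_trichotomy t r with hcase | hcase | hcase
  · -- 1 ≤ t < r
    have habs : 2 * t ^ n = ‖z ^ (n+1) + 1‖ := by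
      rw [h2, norm_mul, norm_pow]
      simp [Complex.norm_two, htdef]
    have hle : ‖z ^ (n+1) + 1‖ ≤ t ^ (n+1) + 1 := by
      calc ‖z ^ (n+1) + 1‖
          ≤ ‖z ^ (n+1)‖ + ‖(1:ℂ)‖ := norm_add_le _ _
        _ = t ^ (n+1) + 1 := by rw [norm_pow, norm_one]
    have hg : 2 * t ^ n ≤ t ^ (n+1) + 1 := by rw [habs]; exact hle
    rcases eq_or_lt_of_le ht1 with hteq | ht1'
    · -- t = 1 : show z = 1, contradiction
      have h4 : ‖z ^ (n+1) + 1‖ = 2 := by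
        rw [← habs, ← hteq]; ring
      have ha : ‖z ^ (n+1)‖ = 1 := by rw [norm_pow, ← htdef, ← hteq, one_pow]
      have h5 : Complex.normSq (z ^ (n+1) + 1) = 4 := by
        rw [← Complex.sq_norm, h4]; norm_num
      have h6 : Complex.normSq (z ^ (n+1)) = 1 := by
        rw [← Complex.sq_norm, ha]; norm_num
      have h7 : (z ^ (n+1)).re = 1 := by
        have hns := Complex.normSq_add (z ^ (n+1)) 1
        simp only [map_one, Complex.normSq_one] at hns
        rw [h5, h6] at hns
        rw [mul_one] at hns
        linarith
      have h8 : (z ^ (n+1)).im = 0 := by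
        have hns := Complex.normSq_apply (z ^ (n+1))
        rw [h6, h7] at hns
        nlinarith
      have ha1 : z ^ (n+1) = 1 := Complex.ext (by simp [h7]) (by simp [h8])
      have hzn1 : z ^ n = 1 := by
        rw [ha1] at h2
        linear_combination -h2 / 2
      have hz1 : z = 1 := by
        calc z = z * z ^ n := by rw [hzn1, mul_one]
          _ = z ^ (n+1) := by rw [pow_succ]; ring
          _ = 1 := ha1
      rw [hz1] at hz
      simp only [one_pow, Finset.sum_const, Finset.card_range, nsmul_eq_mul, mul_one] at hz
      have : (n:ℂ) = 1 := by linear_combination -hz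
      have : n = 1 := by exact_mod_cast this
      omega
    · -- 1 < t < r
      have hFt := hneg t ht1' hcase
      have hgid : t ^ (n+1) - 2 * t ^ n + 1
          = (t - 1) * (t ^ n - ∑ i ∈ Finset.range n, t ^ i) := by
        linear_combination geom_sum_mul t n
      have hprod : (t - 1) * (t ^ n - ∑ i ∈ Finset.range n, t ^ i) < 0 :=
        mul_neg_of_pos_of_neg (by linarith) hFt
      linarith [hgid ▸ hprod]
  · -- t = r : equality analysis
    have hw : ‖z⁻¹‖ = r⁻¹ := by rw [norm_inv, ← hcase]
    have h1le : ∀ j ∈ Finset.range n, ((z⁻¹) ^ (j+1)).re ≤ (r⁻¹) ^ (j+1) := by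
      intro j _
      calc ((z⁻¹) ^ (j+1)).re ≤ ‖(z⁻¹) ^ (j+1)‖ := Complex.re_le_norm _
        _ = (r⁻¹) ^ (j+1) := by rw [norm_pow, hw]
    have hsum0 : ∑ j ∈ Finset.range n, ((r⁻¹) ^ (j+1) - ((z⁻¹) ^ (j+1)).re) = 0 := by
      rw [Finset.sum_sub_distrib, hre1, hSr]; ring
    have heq := (Finset.sum_eq_zero_iff_of_nonneg
      (fun j hj => sub_nonneg.mpr (h1le j hj))).mp hsum0
    have h0 : (z⁻¹).re = r⁻¹ := by
      have h00 := sub_eq_zero.mp (heq 0 (Finset.mem_range.mpr (by omega)))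
      simpa using h00.symm
    have habs2 : ‖z⁻¹‖ = r⁻¹ := hw
    have him : (z⁻¹).im = 0 := by
      have hns : Complex.normSq z⁻¹ = r⁻¹ ^ 2 := by
        rw [← Complex.sq_norm, habs2]
      rw [Complex.normSq_apply, h0] at hns
      nlinarith
    have hzinv : z⁻¹ = ((r:ℂ))⁻¹ := by
      apply Complex.ext
      · rw [← Complex.ofReal_inv, Complex.ofReal_re]; exact h0
      · rw [← Complex.ofReal_inv, Complex.ofReal_im]; exact him
    exact hzr (inv_injective hzinv)
  · -- t > r
    have hinv : t⁻¹ < r⁻¹ := inv_strictAnti₀ hr0 hcase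
    have hS := hSmono t⁻¹ r⁻¹ (by positivity) hinv
    rw [hSr] at hS
    have hle2 : (1:ℝ) ≤ ∑ j ∈ Finset.range n, (t⁻¹) ^ (j+1) := by
      rw [← hre1]
      apply Finset.sum_le_sum
      intro j _
      calc ((z⁻¹) ^ (j+1)).re ≤ ‖(z⁻¹) ^ (j+1)‖ := Complex.re_le_norm _
        _ = (t⁻¹) ^ (j+1) := by rw [norm_pow, habsinv]
    linarith
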